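/- Let N be an odd positive integer and let λ_0, …, λ_N be pairwise distinct positive real numbers. Assume Φ_N^{(j)}(x) ≥ 0 for every real x > 0 and every integer j ≥ 0. Then for every x ∈ [0,1], every nonnegative integer k with 2k+1 ≤ N, and every vector p = (p_0, …, p_k) ∈ ℝ^{k+1}, one has Σ_{i=0}^{k} Σ_{j=0}^{k} p_i p_j (b_{i+j}(x) − b_{i+j+1}(x)) ≥ 0. -/

import Mathlib

set_option maxHeartbeats 1000000

open intervalIntegral Finset

private lemma expandInt (g : ℝ → ℝ) (hg : Continuous g) (m : ℕ) (x : ℝ) :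
    (∫ u in (0:ℝ)..x, (x - u) ^ m * g u)
      = ∑ r ∈ Finset.range (m + 1),
          (m.choose r : ℝ) * x ^ r * ∫ u in (0:ℝ)..x, (-u) ^ (m - r) * g u := by
  have h1 : ∀ r ∈ Finset.range (m+1),
      (m.choose r : ℝ) * x ^ r * (∫ u in (0:ℝ)..x, (-u) ^ (m - r) * g u)
      = ∫ u in (0:ℝ)..x, (m.choose r : ℝ) * x ^ r * ((-u) ^ (m - r) * g u) := fun r _ =>
    (intervalIntegral.integral_const_mul _ _).symm
  rw [Finset.sum_congr rfl h1, ← intervalIntegral.integral_finset_sum]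
  · apply intervalIntegral.integral_congr; intro u _
    show (x - u) ^ m * g u = _
    rw [show x - u = x + (-u) by ring, add_pow, Finset.sum_mul]
    exact Finset.sum_congr rfl fun r _ => by ring
  · intro r _
    exact Continuous.intervalIntegrable (by continuity) 0 x

private lemma repLem {N : ℕ} {Φ : ℝ → ℝ}
    (hd : ∀ n, Differentiable ℝ (iteratedDeriv n Φ))
    (hΦ0 : ∀ j < N, iteratedDeriv j Φ 0 = 0) (hΦN : iteratedDeriv N Φ 0 = 1) :
    ∀ m, m ≤ N → ∀ x : ℝ, (m.factorial : ℝ) * iteratedDeriv (N - m) Φ x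
      = x ^ m + ∫ u in (0:ℝ)..x, (x - u) ^ m * iteratedDeriv (N + 1) Φ u := by
  have hc : ∀ n, Continuous (iteratedDeriv n Φ) := fun n => (hd n).continuous
  have hHD : ∀ n (y : ℝ), HasDerivAt (iteratedDeriv n Φ) (iteratedDeriv (n+1) Φ y) y := by
    intro n y; rw [iteratedDeriv_succ]; exact ((hd n) y).hasDerivAt
  set g := iteratedDeriv (N + 1) Φ with hgdef
  intro m
  induction m with
  | zero =>
      intro _ x
      have hI := intervalIntegral.integral_eq_sub_of_hasDerivAt
        (f := iteratedDeriv N Φ) (f' := g) (a := 0) (b := x)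
        (fun u _ => hHD N u) ((hc (N+1)).intervalIntegrable 0 x)
      simp only [Nat.factorial_zero, Nat.cast_one, one_mul, Nat.sub_zero, pow_zero]
      rw [hΦN] at hI
      linarith [hI]
  | succ m ih =>
      intro hm1 x
      have hmN : m ≤ N := Nat.le_of_succ_le hm1
      have ihx := ih hmN
      set H : ℕ → ℝ → ℝ := fun r y => ∫ u in (0:ℝ)..y, (-u) ^ r * g u with hHdef
      have hHd : ∀ s (y : ℝ), HasDerivAt (H s) ((-y) ^ s * g y) y := by
        intro s y
        exact ((Continuous.integral_hasStrictDerivAt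
          (f := fun u => (-u) ^ s * g u) (by continuity) 0 y)).hasDerivAt
      have ihs : ∀ y : ℝ, ∑ r ∈ Finset.range (m+1), (m.choose r : ℝ) * y ^ r * H (m - r) y
          = (m.factorial : ℝ) * iteratedDeriv (N - m) Φ y - y ^ m := by
        intro y
        have := expandInt g (hc (N+1)) m y
        rw [← this, ihx y]; ring
      -- define L and R
      set L : ℝ → ℝ := fun y => ((m+1).factorial : ℝ) * iteratedDeriv (N - (m+1)) Φ y with hLdef
      set R : ℝ → ℝ := fun y => y ^ (m+1)
        + ∑ r ∈ Finset.range (m+2), ((m+1).choose r : ℝ) * y ^ r * H (m+1-r) y with hRdef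
      have hL' : ∀ y : ℝ, HasDerivAt L ((m+1 : ℝ) * ((m.factorial : ℝ) * iteratedDeriv (N - m) Φ y)) y := by
        intro y
        have h1 : HasDerivAt (iteratedDeriv (N - (m+1)) Φ) (iteratedDeriv (N - m) Φ y) y := by
          have e : N - (m+1) + 1 = N - m := by omega
          have h := hHD (N - (m+1)) y
          rw [e] at h
          exact h
        have := h1.const_mul (((m+1).factorial : ℝ))
        refine this.congr_deriv ?_
        rw [Nat.factorial_succ]; push_cast; ring
      have hR' : ∀ y : ℝ, HasDerivAt R ((m+1 : ℝ) * ((m.factorial : ℝ) * iteratedDeriv (N - m) Φ y)) y := by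
        intro y
        have hterm : ∀ r ∈ Finset.range (m+2),
            HasDerivAt (fun y : ℝ => ((m+1).choose r : ℝ) * y ^ r * H (m+1-r) y)
              ((((m+1).choose r : ℝ) * ((r : ℝ) * y ^ (r-1))) * H (m+1-r) y
                + (((m+1).choose r : ℝ) * y ^ r) * ((-y) ^ (m+1-r) * g y)) y := by
          intro r _
          have h1 : HasDerivAt (fun y : ℝ => ((m+1).choose r : ℝ) * y ^ r)
              (((m+1).choose r : ℝ) * ((r : ℝ) * y ^ (r-1))) y :=
            (hasDerivAt_pow r y).const_mul _
          exact h1.mul (hHd (m+1-r) y)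
        have hsum := HasDerivAt.fun_sum hterm
        have hpow : HasDerivAt (fun y : ℝ => y ^ (m+1)) ((m+1 : ℝ) * y ^ m) y := by
          have := hasDerivAt_pow (m+1) y
          simpa using this
        have hfull := hpow.add hsum
        refine hfull.congr_deriv ?_
        rw [Finset.sum_add_distrib]
        have hS2 : ∑ r ∈ Finset.range (m+2),
            (((m+1).choose r : ℝ) * y ^ r) * ((-y) ^ (m+1-r) * g y) = 0 := by
          have : ∑ r ∈ Finset.range (m+2),
              (((m+1).choose r : ℝ) * y ^ r) * ((-y) ^ (m+1-r) * g y)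
              = ((y + (-y)) ^ (m+1)) * g y := by
            rw [add_pow, Finset.sum_mul]
            exact Finset.sum_congr rfl fun r _ => by ring
          rw [this]; simp
        have hS1 : ∑ r ∈ Finset.range (m+2),
            (((m+1).choose r : ℝ) * ((r : ℝ) * y ^ (r-1))) * H (m+1-r) y
            = (m+1 : ℝ) * ((m.factorial : ℝ) * iteratedDeriv (N - m) Φ y - y ^ m) := by
          rw [Finset.sum_range_succ']
          simp only [Nat.cast_zero, zero_mul, mul_zero, add_zero]
          have hcongr : ∀ i ∈ Finset.range (m+1),
              (((m+1).choose (i+1) : ℝ) * (((i+1 : ℕ) : ℝ) * y ^ ((i+1)-1))) * H (m+1-(i+1)) y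
              = (m+1 : ℝ) * ((m.choose i : ℝ) * y ^ i * H (m - i) y) := by
            intro i _
            have hch : ((m+1).choose (i+1)) * (i+1) = (m+1) * (m.choose i) := by
              rw [← Nat.add_one_mul_choose_eq]
            have hch' : (((m+1).choose (i+1) : ℝ)) * ((i+1 : ℕ) : ℝ) = ((m+1 : ℕ) : ℝ) * (m.choose i : ℝ) := by
              exact_mod_cast congrArg (Nat.cast : ℕ → ℝ) hch
            have : m + 1 - (i+1) = m - i := by omega
            rw [this]
            simp only [Nat.add_sub_cancel]
            push_cast at hch' ⊢
            linear_combination (y ^ i * H (m - i) y) * hch'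
          rw [Finset.sum_congr rfl hcongr, ← Finset.mul_sum, ihs y]
        rw [hS1, hS2, add_zero]; ring
      have h0 : L 0 = R 0 := by
        have hL0 : L 0 = 0 := by
          rw [hLdef]; simp only
          rw [hΦ0 (N - (m+1)) (by omega)]; ring
        have hR0 : R 0 = 0 := by
          rw [hRdef]; simp only
          have : ∀ r ∈ Finset.range (m+2), ((m+1).choose r : ℝ) * (0:ℝ) ^ r * H (m+1-r) 0 = 0 := by
            intro r _
            have : H (m+1-r) 0 = 0 := by rw [hHdef]; simp
            rw [this]; ring
          rw [Finset.sum_congr rfl this]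
          simp
        rw [hL0, hR0]
      have hconst : ∀ y : ℝ, L y - R y = L 0 - R 0 := by
        intro y
        have hdiffLR : Differentiable ℝ (fun y => L y - R y) := fun y =>
          ((hL' y).sub (hR' y)).differentiableAt
        have hz : ∀ y : ℝ, deriv (fun y => L y - R y) y = 0 := by
          intro y
          have := (hL' y).sub (hR' y)
          have h2 := this.deriv; rw [sub_self] at h2; exact h2
        exact is_const_of_deriv_eq_zero hdiffLR hz y 0
      have hLR : L x = R x := by
        have := hconst x
        rw [h0] at this
        linarith
      rw [hLdef, hRdef] at hLR
      simp only at hLR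
      rw [hLR, expandInt g (hc (N+1)) (m+1) x]

private lemma sumSq (k : ℕ) (q : Fin (k+1) → ℝ) (v : ℝ) :
    ∑ i : Fin (k+1), ∑ j : Fin (k+1),
        q i * q j * (v ^ ((i:ℕ)+(j:ℕ)) - v ^ ((i:ℕ)+(j:ℕ)+1))
      = (∑ i : Fin (k+1), q i * v ^ (i:ℕ)) ^ 2 * (1 - v) := by
  have h1 : ∀ i j : Fin (k+1), q i * q j * (v ^ ((i:ℕ)+(j:ℕ)) - v ^ ((i:ℕ)+(j:ℕ)+1))
      = (q i * v ^ (i:ℕ)) * ((q j * v ^ (j:ℕ)) * (1 - v)) := by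
    intro i j
    rw [pow_succ, pow_add]
    ring
  rw [sq, Finset.sum_mul_sum, Finset.sum_mul]
  apply Finset.sum_congr rfl
  intro i _
  rw [Finset.sum_mul]
  apply Finset.sum_congr rfl
  intro j _
  rw [h1 i j]
  ring

private lemma smoothSpan {N : ℕ} (l : Fin (N + 1) → ℝ) {Φ : ℝ → ℝ}
    (hΦmem : Φ ∈ Submodule.span ℝ
        (Set.range (fun j : Fin (N + 1) => fun x : ℝ => Real.exp (l j * x)))) :
    ContDiff ℝ (⊤ : ℕ∞) Φ := by
  induction hΦmem using Submodule.span_induction with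
  | mem f hf =>
      obtain ⟨j, rfl⟩ := hf
      exact Real.contDiff_exp.comp (contDiff_const.mul contDiff_id)
  | zero => exact contDiff_const
  | add f g _ _ hf hg => exact hf.add hg
  | smul c f _ hf => exact hf.const_smul c

/-- Under the nonnegativity assumption on all derivatives of `Φ_N` on
`(0, ∞)`, for every `x ∈ [0,1]`, every `k` with `2k+1 ≤ N` and every `p ∈ ℝ^{k+1}`,
`Σ_{i,j=0}^{k} p_i p_j (b_{i+j}(x) − b_{i+j+1}(x)) ≥ 0`. -/
theorem hankel_difference_quadratic_form_nonneg
    (N : ℕ) (hN : 0 < N) (hNodd : Odd N)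
    (l : Fin (N + 1) → ℝ) (hl : Function.Injective l) (hlpos : ∀ j, 0 < l j)
    (Φ : ℝ → ℝ)
    (hΦmem : Φ ∈ Submodule.span ℝ
        (Set.range (fun j : Fin (N + 1) => fun x : ℝ => Real.exp (l j * x))))
    (hΦ0 : ∀ j < N, iteratedDeriv j Φ 0 = 0)
    (hΦN : iteratedDeriv N Φ 0 = 1)
    (hΦnonneg : ∀ x : ℝ, 0 < x → ∀ j : ℕ, 0 ≤ iteratedDeriv j Φ x)
    (b : ℕ → ℝ → ℝ)
    (hb : ∀ j ≤ N, b j = fun x => (Nat.factorial j : ℝ) * iteratedDeriv (N - j) Φ x) :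
    ∀ x ∈ Set.Icc (0 : ℝ) 1, ∀ k : ℕ, 2 * k + 1 ≤ N → ∀ p : Fin (k + 1) → ℝ,
      0 ≤ ∑ i : Fin (k + 1), ∑ j : Fin (k + 1),
        p i * p j * (b ((i : ℕ) + (j : ℕ)) x - b ((i : ℕ) + (j : ℕ) + 1) x) := by
  -- smoothness
  have hsmooth : ContDiff ℝ (⊤ : ℕ∞) Φ := smoothSpan l hΦmem
  have hd : ∀ n, Differentiable ℝ (iteratedDeriv n Φ) := fun n =>
    hsmooth.differentiable_iteratedDeriv n (by exact_mod_cast WithTop.coe_lt_top _)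
  have hc : ∀ n, Continuous (iteratedDeriv n Φ) := fun n => (hd n).continuous
  set g := iteratedDeriv (N + 1) Φ with hgdef
  have hg : Continuous g := hc (N + 1)
  have hg0 : ∀ u : ℝ, 0 ≤ u → 0 ≤ g u := by
    intro u hu
    rcases hu.lt_or_eq with h | h
    · exact hΦnonneg u h (N + 1)
    · rw [← h]
      have ht : Filter.Tendsto g (nhdsWithin 0 (Set.Ioi 0)) (nhds (g 0)) :=
        (hg.continuousWithinAt (s := Set.Ioi 0) (x := 0))
      refine ge_of_tendsto ht ?_
      filter_upwards [self_mem_nhdsWithin] with v hv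
      exact hΦnonneg v hv (N + 1)
  have hrep := repLem hd hΦ0 hΦN
  intro x hx k hk p
  obtain ⟨hx0, hx1⟩ := hx
  have hcm : ∀ a : ℕ, Continuous (fun u : ℝ => (x - u) ^ a * g u) := fun a =>
    ((continuous_const.sub continuous_id).pow a).mul hg
  have hci : ∀ (c : ℝ) (a a' : ℕ),
      Continuous (fun u : ℝ => c * ((x - u) ^ a - (x - u) ^ a') * g u) := fun c a a' =>
    (continuous_const.mul (((continuous_const.sub continuous_id).pow a).sub
      ((continuous_const.sub continuous_id).pow a'))).mul hg
  set I : ℕ → ℝ := fun m => ∫ u in (0:ℝ)..x, (x - u) ^ m * g u with hIdef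
  have hbI : ∀ m : ℕ, m + 1 ≤ N →
      b m x - b (m+1) x = (x ^ m - x ^ (m+1)) + (I m - I (m+1)) := by
    intro m hm
    rw [hb m (Nat.le_of_succ_le hm), hb (m+1) hm]
    simp only
    have h1 := hrep m (Nat.le_of_succ_le hm) x
    have h2 := hrep (m+1) hm x
    rw [h1, h2, hIdef]
    simp only
    ring
  have hmle : ∀ i j : Fin (k+1), (i:ℕ) + (j:ℕ) + 1 ≤ N := by
    intro i j
    have hi := i.is_le
    have hj := j.is_le
    omega
  have hsplit : ∀ i j : Fin (k+1),
      p i * p j * (b ((i:ℕ)+(j:ℕ)) x - b ((i:ℕ)+(j:ℕ)+1) x)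
      = p i * p j * (x ^ ((i:ℕ)+(j:ℕ)) - x ^ ((i:ℕ)+(j:ℕ)+1))
        + p i * p j * (I ((i:ℕ)+(j:ℕ)) - I ((i:ℕ)+(j:ℕ)+1)) := by
    intro i j
    rw [hbI _ (hmle i j)]
    ring
  calc (0:ℝ)
      ≤ (∑ i : Fin (k+1), p i * x ^ (i:ℕ)) ^ 2 * (1 - x)
        + ∑ i : Fin (k+1), ∑ j : Fin (k+1),
            p i * p j * (I ((i:ℕ)+(j:ℕ)) - I ((i:ℕ)+(j:ℕ)+1)) := by
        have hA : (0:ℝ) ≤ (∑ i : Fin (k+1), p i * x ^ (i:ℕ)) ^ 2 * (1 - x) :=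
          mul_nonneg (sq_nonneg _) (by linarith)
        have hB : (0:ℝ) ≤ ∑ i : Fin (k+1), ∑ j : Fin (k+1),
            p i * p j * (I ((i:ℕ)+(j:ℕ)) - I ((i:ℕ)+(j:ℕ)+1)) := by
          have hterm : ∀ i j : Fin (k+1),
              p i * p j * (I ((i:ℕ)+(j:ℕ)) - I ((i:ℕ)+(j:ℕ)+1))
              = ∫ u in (0:ℝ)..x, p i * p j *
                  ((x-u) ^ ((i:ℕ)+(j:ℕ)) - (x-u) ^ ((i:ℕ)+(j:ℕ)+1)) * g u := by
            intro i j
            rw [hIdef]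
            simp only
            rw [← intervalIntegral.integral_sub (Continuous.intervalIntegrable (hcm _) 0 x)
              (Continuous.intervalIntegrable (hcm _) 0 x)]
            rw [← intervalIntegral.integral_const_mul]
            apply intervalIntegral.integral_congr
            intro u _
            ring
          have hswap : ∑ i : Fin (k+1), ∑ j : Fin (k+1),
              p i * p j * (I ((i:ℕ)+(j:ℕ)) - I ((i:ℕ)+(j:ℕ)+1))
              = ∫ u in (0:ℝ)..x, ∑ i : Fin (k+1), ∑ j : Fin (k+1),
                  p i * p j * ((x-u) ^ ((i:ℕ)+(j:ℕ)) - (x-u) ^ ((i:ℕ)+(j:ℕ)+1)) * g u := by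
            have e1 : ∀ i : Fin (k+1),
                ∑ j : Fin (k+1), p i * p j * (I ((i:ℕ)+(j:ℕ)) - I ((i:ℕ)+(j:ℕ)+1))
                = ∫ u in (0:ℝ)..x, ∑ j : Fin (k+1),
                    p i * p j * ((x-u) ^ ((i:ℕ)+(j:ℕ)) - (x-u) ^ ((i:ℕ)+(j:ℕ)+1)) * g u := by
              intro i
              rw [intervalIntegral.integral_finset_sum]
              · exact Finset.sum_congr rfl fun j _ => hterm i j
              · intro j _
                exact Continuous.intervalIntegrable (hci _ _ _) 0 x
            calc ∑ i : Fin (k+1), ∑ j : Fin (k+1),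
                  p i * p j * (I ((i:ℕ)+(j:ℕ)) - I ((i:ℕ)+(j:ℕ)+1))
                = ∑ i : Fin (k+1), ∫ u in (0:ℝ)..x, ∑ j : Fin (k+1),
                    p i * p j * ((x-u) ^ ((i:ℕ)+(j:ℕ)) - (x-u) ^ ((i:ℕ)+(j:ℕ)+1)) * g u :=
                Finset.sum_congr rfl fun i _ => e1 i
              _ = ∫ u in (0:ℝ)..x, ∑ i : Fin (k+1), ∑ j : Fin (k+1),
                    p i * p j * ((x-u) ^ ((i:ℕ)+(j:ℕ)) - (x-u) ^ ((i:ℕ)+(j:ℕ)+1)) * g u := by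
                rw [intervalIntegral.integral_finset_sum]
                intro i _
                exact Continuous.intervalIntegrable
                  (continuous_finset_sum _ (fun j _ => hci _ _ _)) 0 x
          rw [hswap]
          apply intervalIntegral.integral_nonneg hx0
          intro u hu
          have h1 : ∀ i j : Fin (k+1),
              p i * p j * ((x-u) ^ ((i:ℕ)+(j:ℕ)) - (x-u) ^ ((i:ℕ)+(j:ℕ)+1)) * g u
              = p i * p j * ((x-u) ^ ((i:ℕ)+(j:ℕ)) - (x-u) ^ ((i:ℕ)+(j:ℕ)+1)) * g u := fun _ _ => rfl
          have hsum : ∑ i : Fin (k+1), ∑ j : Fin (k+1),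
              p i * p j * ((x-u) ^ ((i:ℕ)+(j:ℕ)) - (x-u) ^ ((i:ℕ)+(j:ℕ)+1)) * g u
              = ((∑ i : Fin (k+1), p i * (x-u) ^ (i:ℕ)) ^ 2 * (1 - (x-u))) * g u := by
            rw [← sumSq k p (x-u)]
            rw [Finset.sum_mul]
            apply Finset.sum_congr rfl
            intro i _
            rw [Finset.sum_mul]
          rw [hsum]
          apply mul_nonneg
          · apply mul_nonneg (sq_nonneg _)
            have : x - u ≤ 1 := by
              have := hu.1
              linarith
            linarith
          · exact hg0 u hu.1
        linarith
    _ = ∑ i : Fin (k+1), ∑ j : Fin (k+1),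
          p i * p j * (b ((i:ℕ)+(j:ℕ)) x - b ((i:ℕ)+(j:ℕ)+1) x) := by
        have h1 : ∑ i : Fin (k+1), ∑ j : Fin (k+1),
            p i * p j * (b ((i:ℕ)+(j:ℕ)) x - b ((i:ℕ)+(j:ℕ)+1) x)
            = ∑ i : Fin (k+1), ∑ j : Fin (k+1),
                (p i * p j * (x ^ ((i:ℕ)+(j:ℕ)) - x ^ ((i:ℕ)+(j:ℕ)+1))
                  + p i * p j * (I ((i:ℕ)+(j:ℕ)) - I ((i:ℕ)+(j:ℕ)+1))) := by
          apply Finset.sum_congr rfl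
          intro i _
          apply Finset.sum_congr rfl
          intro j _
          exact hsplit i j
        rw [h1]
        simp only [Finset.sum_add_distrib]
        rw [sumSq k p x]
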